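/- arXiv:2102.02741 — 4 statements merged into one kernel-verified Lean document; each statement's English description precedes it below -/
import Mathlib

section
/- Let a = (a_1,...,a_M) ∈ ℝ^M and let a' = (a_1,...,a_M, 0,...,0) ∈ ℝ^N be a padded with N−M zeros (M ≤ N). Then the discrete Wasserstein-2 distance between the point sets {a_m} (with uniform weights 1/M) and {a'_n} (with uniform weights 1/N) satisfies d_w(a, a') ≤ √((N−M)/(M·N)) · ‖a‖₂. -/
open Finset

/-- The set of coupling matrices between uniform distributions on `α` and `β`. -/
def couplings (α β : Type) [Fintype α] [Fintype β] : Set (α → β → ℝ) :=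
  {T | (∀ m n, 0 ≤ T m n) ∧ (∀ m, ∑ n, T m n = 1 / (Fintype.card α : ℝ)) ∧
       (∀ n, ∑ m, T m n = 1 / (Fintype.card β : ℝ))}

/-- Discrete Wasserstein-2 distance, given the matrix of squared ground costs `c`. -/
noncomputable def dW {α β : Type} [Fintype α] [Fintype β] (c : α → β → ℝ) : ℝ :=
  sInf ((fun T => Real.sqrt (∑ m, ∑ n, T m n * c m n)) '' couplings α β)

/-- Discrete Gromov-Wasserstein distance between two "distance matrices". -/
noncomputable def dGW {α β : Type} [Fintype α] [Fintype β]
    (A : α → α → ℝ) (B : β → β → ℝ) : ℝ :=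
  sInf ((fun T => Real.sqrt (∑ m, ∑ m', ∑ n, ∑ n',
    T m n * T m' n' * (A m m' - B n n')^2)) '' couplings α β)

/-- Spectral norm (largest singular value) of a real square matrix. -/
noncomputable def sn {n : ℕ} (A : Matrix (Fin n) (Fin n) ℝ) : ℝ :=
  ‖Matrix.toEuclideanCLM (𝕜 := ℝ) A‖

/-- Frobenius norm. -/
noncomputable def frob {m n : ℕ} (A : Matrix (Fin m) (Fin n) ℝ) : ℝ :=
  Real.sqrt (∑ i, ∑ j, (A i j)^2)

/-- Euclidean norm of a vector. -/
noncomputable def enorm {n : ℕ} (v : Fin n → ℝ) : ℝ :=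
  Real.sqrt (∑ i, (v i)^2)

lemma sum_eq_single' (N : ℕ) (k : ℕ) (hk : k < N) (x : ℝ) :
    ∑ n : Fin N, (if (n : ℕ) = k then x else 0) = x := by
  rw [Fin.sum_univ_eq_sum_range (fun i => if i = k then x else 0) N,
    Finset.sum_ite_eq' (Finset.range N) k]
  simp [hk]

lemma sum_tail (N M : ℕ) (hMN : M ≤ N) (c : ℝ) :
    ∑ n : Fin N, (if (n : ℕ) < M then (0:ℝ) else c) = (N - M : ℕ) * c := by
  rw [Fin.sum_univ_eq_sum_range (fun i => if i < M then (0:ℝ) else c) N,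
    Finset.sum_ite, Finset.sum_const_zero, zero_add, Finset.sum_const]
  have : (Finset.range N).filter (fun i => ¬ i < M) = Finset.Ico M N := by
    ext i; simp [Finset.mem_Ico]; omega
  rw [this, Nat.card_Ico, nsmul_eq_mul]

theorem stmt_5 (M N : ℕ) (hM : 0 < M) (hMN : M ≤ N) (a : Fin M → ℝ)
    (a' : Fin N → ℝ)
    (ha' : ∀ n : Fin N, a' n = if h : (n : ℕ) < M then a ⟨n, h⟩ else 0) :
    dW (fun m n => (a m - a' n)^2)
      ≤ Real.sqrt (((N : ℝ) - M) / (M * N)) * _root_.enorm a := by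
  have hN : 0 < N := lt_of_lt_of_le hM hMN
  have hMR : (0:ℝ) < M := by exact_mod_cast hM
  have hNR : (0:ℝ) < N := by exact_mod_cast hN
  have hsub : (0:ℝ) ≤ (N:ℝ) - M := by
    have : (M:ℝ) ≤ N := by exact_mod_cast hMN
    linarith
  set T : Fin M → Fin N → ℝ := fun m n =>
    (if (n : ℕ) = (m : ℕ) then (1:ℝ)/N else 0) +
    (if (n : ℕ) < M then (0:ℝ) else (1:ℝ)/((M:ℝ)*N)) with hT
  have hmem : T ∈ couplings (Fin M) (Fin N) := by
    refine ⟨fun m n => ?_, fun m => ?_, fun n => ?_⟩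
    · apply add_nonneg <;> split <;> positivity
    · rw [hT]
      simp only
      rw [Finset.sum_add_distrib, sum_eq_single' N m (lt_of_lt_of_le m.2 hMN),
        sum_tail N M hMN, Fintype.card_fin, Nat.cast_sub hMN]
      field_simp
      ring
    · rw [hT]
      simp only
      rw [Finset.sum_add_distrib, Fintype.card_fin]
      by_cases h : (n : ℕ) < M
      · have h1 : ∑ m : Fin M, (if (n:ℕ) = (m:ℕ) then (1:ℝ)/N else 0) = 1/N := by
          rw [Fin.sum_univ_eq_sum_range (fun i => if (n:ℕ) = i then (1:ℝ)/N else 0) M,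
            Finset.sum_ite_eq (Finset.range M) (n:ℕ)]
          simp [h]
        rw [h1]
        simp [h]
      · have h1 : ∑ m : Fin M, (if (n:ℕ) = (m:ℕ) then (1:ℝ)/N else 0) = 0 :=
          Finset.sum_eq_zero (fun m _ => by
            have : (n:ℕ) ≠ (m:ℕ) := by omega
            simp [this])
        rw [h1]
        simp only [h, if_false, Finset.sum_const, Finset.card_univ, Fintype.card_fin,
          nsmul_eq_mul, zero_add]
        field_simp
  have hpt : ∀ m n, T m n * (a m - a' n)^2 =
      (if (n : ℕ) < M then (0:ℝ) else (1:ℝ)/((M:ℝ)*N) * (a m)^2) := by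
    intro m n
    rw [hT]
    simp only
    by_cases h1 : (n : ℕ) = (m : ℕ)
    · have hlt : (n : ℕ) < M := h1 ▸ m.2
      have : a' n = a m := by
        rw [ha' n]; simp only [hlt, dif_pos]
        congr 1; exact Fin.ext h1
      simp [h1, hlt, this]
    · by_cases h2 : (n : ℕ) < M
      · simp [h1, h2]
      · have : a' n = 0 := by rw [ha' n]; simp [h2]
        simp [h1, h2, this]
  have hval : ∑ m, ∑ n, T m n * (a m - a' n)^2
      = ((N:ℝ) - M)/((M:ℝ)*N) * ∑ i, (a i)^2 := by
    have key : ∀ m : Fin M, ∑ n, T m n * (a m - a' n)^2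
        = ((N:ℝ) - M)/((M:ℝ)*N) * (a m)^2 := by
      intro m
      rw [Finset.sum_congr rfl (fun n _ => hpt m n), sum_tail N M hMN,
        Nat.cast_sub hMN]
      ring
    rw [Finset.sum_congr rfl (fun m _ => key m), ← Finset.mul_sum]
  have hle : dW (fun m n => (a m - a' n)^2)
      ≤ Real.sqrt (∑ m, ∑ n, T m n * (a m - a' n)^2) := by
    apply csInf_le
    · exact ⟨0, fun x hx => by
        obtain ⟨S, _, rfl⟩ := hx; exact Real.sqrt_nonneg _⟩
    · exact ⟨T, hmem, rfl⟩
  refine hle.trans_eq ?_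
  rw [hval, Real.sqrt_mul (div_nonneg hsub (by positivity)), _root_.enorm]
end

section
/- Let f : [0,1] → ℝ satisfy the lower Lipschitz bound C₁|x−x'| ≤ |f(x)−f(x')|, and let g : [0,1]² → ℝ be Lipschitz with constant C^g. Let x̃_1,...,x̃_N, y_1,...,y_N ∈ [0,1], set Ã₁ = [g(x̃_v, x̃_{v'})], A₂ = [g(y_u, y_{u'})], μ̃ = (f(x̃_v))_v, ν = (f(y_u))_u. Then for any N×N permutation matrix P, ‖Ã₁ − P A₂ Pᵀ‖_F ≤ (√(2N)·C^g/C₁)·‖μ̃ − Pν‖₂. -/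
open Finset

/-- Euclidean norm of a vector. -/
noncomputable def enorm₂ {n : ℕ} (v : Fin n → ℝ) : ℝ :=
  Real.sqrt (∑ i, (v i)^2)

theorem stmt_11 (C₁ Cg : ℝ) (hC₁ : 0 < C₁) (hCg : 0 ≤ Cg)
    (f : ℝ → ℝ) (g : ℝ → ℝ → ℝ)
    (hf : ∀ x ∈ Set.Icc (0:ℝ) 1, ∀ x' ∈ Set.Icc (0:ℝ) 1,
      C₁ * |x - x'| ≤ |f x - f x'|)
    (hg : ∀ x ∈ Set.Icc (0:ℝ) 1, ∀ y ∈ Set.Icc (0:ℝ) 1,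
          ∀ x' ∈ Set.Icc (0:ℝ) 1, ∀ y' ∈ Set.Icc (0:ℝ) 1,
      |g x y - g x' y'| ≤ Cg * Real.sqrt ((x - x')^2 + (y - y')^2))
    (N : ℕ) (xt y : Fin N → ℝ)
    (hxt : ∀ v, xt v ∈ Set.Icc (0:ℝ) 1) (hy : ∀ u, y u ∈ Set.Icc (0:ℝ) 1)
    (At A₂ : Matrix (Fin N) (Fin N) ℝ)
    (hAt : ∀ v v', At v v' = g (xt v) (xt v'))
    (hA₂ : ∀ u u', A₂ u u' = g (y u) (y u'))
    (μt ν : Fin N → ℝ) (hμt : ∀ v, μt v = f (xt v)) (hν : ∀ u, ν u = f (y u))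
    (σ : Equiv.Perm (Fin N)) (P : Matrix (Fin N) (Fin N) ℝ)
    (hP : ∀ v u, P v u = if σ u = v then 1 else 0) :
    frob (At - P * A₂ * P.transpose)
      ≤ Real.sqrt (2 * N) * Cg / C₁ * enorm₂ (μt - P.mulVec ν) := by
  set D := μt - P.mulVec ν with hD
  have hPA : ∀ v v', (P * A₂ * P.transpose) v v' = A₂ (σ.symm v) (σ.symm v') := by
    intro v v'
    simp only [Matrix.mul_apply, Matrix.transpose_apply, hP]
    have h1 : ∀ (w : Fin N) (u : Fin N), (σ u = w) = (u = σ.symm w) := by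
      intro w u; simp [Equiv.eq_symm_apply, eq_comm]
    simp only [h1]
    rw [Finset.sum_eq_single (σ.symm v')]
    · simp [Finset.sum_eq_single (σ.symm v),
        Finset.sum_ite_eq' (Finset.univ : Finset (Fin N))]
    · intro b _ hb; simp [hb]
    · simp
  have hPν : ∀ v, P.mulVec ν v = ν (σ.symm v) := by
    intro v
    simp only [Matrix.mulVec, dotProduct, hP]
    have h1 : ∀ (u : Fin N), (σ u = v) = (u = σ.symm v) := by
      intro u; simp [Equiv.eq_symm_apply, eq_comm]
    simp [h1]
  have hx : ∀ v u, |xt v - y u| ≤ |μt v - ν u| / C₁ := by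
    intro v u
    rw [le_div_iff₀ hC₁, mul_comm, hμt, hν]
    exact hf (xt v) (hxt v) (y u) (hy u)
  have key : ∀ v v', ((At - P * A₂ * P.transpose) v v')^2
      ≤ (Cg / C₁)^2 * (D v ^ 2 + D v' ^ 2) := by
    intro v v'
    have hent : (At - P * A₂ * P.transpose) v v'
        = g (xt v) (xt v') - g (y (σ.symm v)) (y (σ.symm v')) := by
      simp [Matrix.sub_apply, hPA, hAt, hA₂]
    have h1 : |g (xt v) (xt v') - g (y (σ.symm v)) (y (σ.symm v'))|
        ≤ Cg * Real.sqrt ((xt v - y (σ.symm v))^2 + (xt v' - y (σ.symm v'))^2) :=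
      hg (xt v) (hxt v) (xt v') (hxt v') (y (σ.symm v)) (hy _) (y (σ.symm v')) (hy _)
    have hxv : (xt v - y (σ.symm v))^2 ≤ (D v / C₁)^2 := by
      have := hx v (σ.symm v)
      have hDv : D v = μt v - ν (σ.symm v) := by simp [hD, hPν]
      rw [hDv]
      calc (xt v - y (σ.symm v))^2 = |xt v - y (σ.symm v)|^2 := (sq_abs _).symm
        _ ≤ (|μt v - ν (σ.symm v)| / C₁)^2 := by
            apply pow_le_pow_left₀ (abs_nonneg _) this
        _ = ((μt v - ν (σ.symm v)) / C₁)^2 := by rw [div_pow, div_pow, sq_abs]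
    have hxv' : (xt v' - y (σ.symm v'))^2 ≤ (D v' / C₁)^2 := by
      have := hx v' (σ.symm v')
      have hDv : D v' = μt v' - ν (σ.symm v') := by simp [hD, hPν]
      rw [hDv]
      calc (xt v' - y (σ.symm v'))^2 = |xt v' - y (σ.symm v')|^2 := (sq_abs _).symm
        _ ≤ (|μt v' - ν (σ.symm v')| / C₁)^2 := by
            apply pow_le_pow_left₀ (abs_nonneg _) this
        _ = ((μt v' - ν (σ.symm v')) / C₁)^2 := by rw [div_pow, div_pow, sq_abs]
    have hsum0 : (0:ℝ) ≤ (xt v - y (σ.symm v))^2 + (xt v' - y (σ.symm v'))^2 :=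
      add_nonneg (sq_nonneg _) (sq_nonneg _)
    calc ((At - P * A₂ * P.transpose) v v')^2
        = |g (xt v) (xt v') - g (y (σ.symm v)) (y (σ.symm v'))|^2 := by
          rw [hent, sq_abs]
      _ ≤ (Cg * Real.sqrt ((xt v - y (σ.symm v))^2 + (xt v' - y (σ.symm v'))^2))^2 := by
          apply pow_le_pow_left₀ (abs_nonneg _) h1
      _ = Cg^2 * ((xt v - y (σ.symm v))^2 + (xt v' - y (σ.symm v'))^2) := by
          rw [mul_pow, Real.sq_sqrt hsum0]
      _ ≤ Cg^2 * ((D v / C₁)^2 + (D v' / C₁)^2) := by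
          apply mul_le_mul_of_nonneg_left (add_le_add hxv hxv') (sq_nonneg _)
      _ = (Cg / C₁)^2 * (D v ^ 2 + D v' ^ 2) := by ring
  have hsum : ∑ v, ∑ v', ((At - P * A₂ * P.transpose) v v')^2
      ≤ (Cg / C₁)^2 * (2 * N * ∑ v, D v ^ 2) := by
    calc ∑ v, ∑ v', ((At - P * A₂ * P.transpose) v v')^2
        ≤ ∑ v, ∑ v', (Cg / C₁)^2 * (D v ^ 2 + D v' ^ 2) := by
          apply Finset.sum_le_sum; intro v _
          apply Finset.sum_le_sum; intro v' _
          exact key v v'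
      _ = ∑ v, ((Cg / C₁)^2 * ((N : ℝ) * D v ^ 2 + ∑ v', D v' ^ 2)) := by
          apply Finset.sum_congr rfl; intro v _
          rw [← Finset.mul_sum, Finset.sum_add_distrib, Finset.sum_const,
            Finset.card_univ, Fintype.card_fin, nsmul_eq_mul]
      _ = (Cg / C₁)^2 * (2 * N * ∑ v, D v ^ 2) := by
          rw [← Finset.mul_sum, Finset.sum_add_distrib, ← Finset.mul_sum,
            Finset.sum_const, Finset.card_univ, Fintype.card_fin, nsmul_eq_mul]
          ring
  have hq : (0:ℝ) ≤ Cg / C₁ := div_nonneg hCg hC₁.le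
  have h2N : (0:ℝ) ≤ 2 * N := by positivity
  have hS : (0:ℝ) ≤ ∑ v, D v ^ 2 := Finset.sum_nonneg fun v _ => sq_nonneg _
  unfold frob enorm₂
  calc Real.sqrt (∑ v, ∑ v', ((At - P * A₂ * P.transpose) v v')^2)
      ≤ Real.sqrt ((Cg / C₁)^2 * (2 * N * ∑ v, D v ^ 2)) := Real.sqrt_le_sqrt hsum
    _ = (Cg / C₁) * (Real.sqrt (2 * N) * Real.sqrt (∑ v, D v ^ 2)) := by
        rw [Real.sqrt_mul (sq_nonneg _), Real.sqrt_sq hq, Real.sqrt_mul h2N]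
    _ = Real.sqrt (2 * N) * Cg / C₁ * Real.sqrt (∑ v, D v ^ 2) := by ring
end

section
/- Let λ̄₁ ∈ ℝ^V and λ̄₂ ∈ ℝ^U with V ≤ U, and let λ̃₁ = (λ̄₁; 0_{U−V}) ∈ ℝ^U be λ̄₁ padded with zeros. For any U×U permutation matrix P, d_w(λ̄₁, λ̄₂) ≤ √((U−V)/(V·U))·‖λ̄₁‖₂ + (1/√U)·‖λ̃₁ − P λ̄₂‖₂. -/
open Finset

/-- Euclidean norm of a vector. -/
noncomputable def enorm' {n : ℕ} (v : Fin n → ℝ) : ℝ :=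
  Real.sqrt (∑ i, (v i)^2)

lemma weighted_minkowski {ι : Type} [Fintype ι] (w f g : ι → ℝ) (hw : ∀ i, 0 ≤ w i) :
    Real.sqrt (∑ i, w i * (f i + g i)^2)
      ≤ Real.sqrt (∑ i, w i * f i ^ 2) + Real.sqrt (∑ i, w i * g i ^ 2) := by
  have hf2 : (0:ℝ) ≤ ∑ i, w i * f i ^ 2 :=
    Finset.sum_nonneg fun i _ => mul_nonneg (hw i) (sq_nonneg _)
  have hg2 : (0:ℝ) ≤ ∑ i, w i * g i ^ 2 :=
    Finset.sum_nonneg fun i _ => mul_nonneg (hw i) (sq_nonneg _)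
  set A := Real.sqrt (∑ i, w i * f i ^ 2) with hA
  set B := Real.sqrt (∑ i, w i * g i ^ 2) with hB
  have hcs : ∑ i, w i * (f i * g i) ≤ A * B := by
    have h := Real.sum_mul_le_sqrt_mul_sqrt Finset.univ
      (fun i => Real.sqrt (w i) * f i) (fun i => Real.sqrt (w i) * g i)
    have e1 : ∀ i : ι, (Real.sqrt (w i) * f i) * (Real.sqrt (w i) * g i)
        = w i * (f i * g i) := by
      intro i
      rw [show (Real.sqrt (w i) * f i) * (Real.sqrt (w i) * g i)
        = (Real.sqrt (w i) * Real.sqrt (w i)) * (f i * g i) by ring,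
        Real.mul_self_sqrt (hw i)]
    have e2 : ∀ i : ι, (Real.sqrt (w i) * f i) ^ 2 = w i * f i ^ 2 := by
      intro i; rw [mul_pow, Real.sq_sqrt (hw i)]
    have e3 : ∀ i : ι, (Real.sqrt (w i) * g i) ^ 2 = w i * g i ^ 2 := by
      intro i; rw [mul_pow, Real.sq_sqrt (hw i)]
    simp_rw [e1, e2, e3] at h
    exact h
  have hA2 : A^2 = ∑ i, w i * f i ^ 2 := Real.sq_sqrt hf2
  have hB2 : B^2 = ∑ i, w i * g i ^ 2 := Real.sq_sqrt hg2
  have key : ∑ i, w i * (f i + g i)^2 ≤ (A + B)^2 := by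
    have expand : ∑ i, w i * (f i + g i)^2
        = (∑ i, w i * f i ^ 2) + 2 * (∑ i, w i * (f i * g i)) + (∑ i, w i * g i ^ 2) := by
      rw [Finset.mul_sum, ← Finset.sum_add_distrib, ← Finset.sum_add_distrib]
      exact Finset.sum_congr rfl fun i _ => by ring
    rw [expand, show (A + B)^2 = A^2 + 2*(A*B) + B^2 by ring, hA2, hB2]
    linarith
  calc Real.sqrt (∑ i, w i * (f i + g i)^2) ≤ Real.sqrt ((A + B)^2) := Real.sqrt_le_sqrt key
    _ = A + B := Real.sqrt_sq (by positivity)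

lemma sum_ite_le {U V : ℕ} (c : ℝ) :
    ∑ n : Fin U, (if V ≤ (n:ℕ) then c else 0) = (U - V : ℕ) * c := by
  rw [Fin.sum_univ_eq_sum_range (fun i => if V ≤ i then c else 0) U, Finset.sum_ite,
    Finset.sum_const, Finset.sum_const, smul_zero, add_zero, nsmul_eq_mul]
  congr 2
  rw [range_eq_Ico, Finset.Ico_filter_le 0 U V, Nat.card_Ico]
  omega

theorem stmt_14 (V U : ℕ) (hV : 0 < V) (hVU : V ≤ U)
    (lam₁ : Fin V → ℝ) (lam₂ : Fin U → ℝ) (lamt : Fin U → ℝ)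
    (hlamt : ∀ n : Fin U, lamt n = if h : (n : ℕ) < V then lam₁ ⟨n, h⟩ else 0)
    (σ : Equiv.Perm (Fin U)) (P : Matrix (Fin U) (Fin U) ℝ)
    (hP : ∀ v u, P v u = if σ u = v then 1 else 0) :
    dW (fun v u => (lam₁ v - lam₂ u)^2)
      ≤ Real.sqrt (((U : ℝ) - V) / (V * U)) * enorm' lam₁
        + (1 / Real.sqrt U) * enorm' (lamt - P.mulVec lam₂) := by
  classical
  have hU : 0 < U := lt_of_lt_of_le hV hVU
  have hVr : (0:ℝ) < V := by exact_mod_cast hV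
  have hUr : (0:ℝ) < U := by exact_mod_cast hU
  set T : Fin V → Fin U → ℝ := fun v u =>
    (if ((σ u : Fin U) : ℕ) = (v : ℕ) then 1/(U:ℝ) else 0)
      + (if V ≤ ((σ u : Fin U) : ℕ) then 1/((V:ℝ)*(U:ℝ)) else 0) with hTdef
  have hnonneg : ∀ v u, 0 ≤ T v u := by
    intro v u
    apply add_nonneg <;> split_ifs <;> positivity
  have hrow : ∀ v, ∑ u, T v u = 1 / (Fintype.card (Fin V) : ℝ) := by
    intro v
    rw [Fintype.card_fin]
    have := Equiv.sum_comp σ (fun n : Fin U =>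
      (if (n : ℕ) = (v : ℕ) then 1/(U:ℝ) else 0)
        + (if V ≤ (n : ℕ) then 1/((V:ℝ)*(U:ℝ)) else 0))
    rw [hTdef]
    simp only []
    rw [this, Finset.sum_add_distrib, sum_ite_le]
    have h1 : ∑ n : Fin U, (if (n : ℕ) = (v : ℕ) then 1/(U:ℝ) else 0) = 1/(U:ℝ) := by
      rw [Finset.sum_eq_single (⟨(v : ℕ), lt_of_lt_of_le v.2 hVU⟩ : Fin U)]
      · simp
      · intro n _ hn
        rw [if_neg]
        intro h
        exact hn (Fin.ext h)
      · intro h; exact absurd (Finset.mem_univ _) h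
    rw [h1, Nat.cast_sub hVU]
    field_simp
    ring
  have hcol : ∀ u, ∑ v, T v u = 1 / (Fintype.card (Fin U) : ℝ) := by
    intro u
    rw [Fintype.card_fin, hTdef]
    simp only []
    rw [Finset.sum_add_distrib]
    by_cases h : ((σ u : Fin U) : ℕ) < V
    · have h1 : ∑ v : Fin V, (if ((σ u : Fin U) : ℕ) = (v : ℕ) then 1/(U:ℝ) else 0)
          = 1/(U:ℝ) := by
        rw [Finset.sum_eq_single (⟨((σ u : Fin U) : ℕ), h⟩ : Fin V)]
        · simp
        · intro v _ hv
          rw [if_neg]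
          intro hh
          exact hv (Fin.ext hh.symm)
        · intro hh; exact absurd (Finset.mem_univ _) hh
      have h2 : ∑ _v : Fin V, (if V ≤ ((σ u : Fin U) : ℕ) then 1/((V:ℝ)*(U:ℝ)) else 0)
          = 0 := by
        simp [Nat.not_le.mpr h]
      rw [h1, h2, add_zero]
    · have h1 : ∑ v : Fin V, (if ((σ u : Fin U) : ℕ) = (v : ℕ) then 1/(U:ℝ) else 0)
          = 0 := by
        apply Finset.sum_eq_zero
        intro v _
        rw [if_neg]
        intro hh
        exact h (hh ▸ v.2)
      have h2 : ∑ _v : Fin V, (if V ≤ ((σ u : Fin U) : ℕ) then 1/((V:ℝ)*(U:ℝ)) else 0)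
          = (V:ℝ) * (1/((V:ℝ)*(U:ℝ))) := by
        rw [if_pos (Nat.not_lt.mp h), Finset.sum_const, Finset.card_univ, Fintype.card_fin,
          nsmul_eq_mul]
      rw [h1, h2, zero_add]
      field_simp
  have hmem : T ∈ couplings (Fin V) (Fin U) := ⟨hnonneg, hrow, hcol⟩
  have hdW : dW (fun v u => (lam₁ v - lam₂ u)^2)
      ≤ Real.sqrt (∑ v, ∑ u, T v u * (lam₁ v - lam₂ u)^2) := by
    apply csInf_le
    · refine ⟨0, ?_⟩
      rintro x ⟨T', -, rfl⟩
      exact Real.sqrt_nonneg _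
    · exact ⟨T, hmem, rfl⟩
  refine le_trans hdW ?_
  -- rewrite as a single sum over the product type
  have hprod : ∑ v, ∑ u, T v u * (lam₁ v - lam₂ u)^2
      = ∑ p : Fin V × Fin U, T p.1 p.2 *
        ((lam₁ p.1 - lamt (σ p.2)) + (lamt (σ p.2) - lam₂ p.2))^2 := by
    rw [Fintype.sum_prod_type]
    exact Finset.sum_congr rfl fun v _ => Finset.sum_congr rfl fun u _ => by ring_nf
  rw [hprod]
  have hmink := weighted_minkowski (fun p : Fin V × Fin U => T p.1 p.2)
    (fun p => lam₁ p.1 - lamt (σ p.2)) (fun p => lamt (σ p.2) - lam₂ p.2)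
    (fun p => hnonneg p.1 p.2)
  refine le_trans hmink ?_
  -- first term
  have hSf : ∑ p : Fin V × Fin U, T p.1 p.2 * (lam₁ p.1 - lamt (σ p.2))^2
      = (((U:ℝ) - V) / ((V:ℝ) * U)) * ∑ i, (lam₁ i)^2 := by
    rw [Fintype.sum_prod_type]
    have hinner : ∀ v : Fin V, ∑ u, T v u * (lam₁ v - lamt (σ u))^2
        = (((U:ℝ) - V) / ((V:ℝ) * U)) * (lam₁ v)^2 := by
      intro v
      have hre := Equiv.sum_comp σ (fun n : Fin U =>
        ((if (n : ℕ) = (v : ℕ) then 1/(U:ℝ) else 0)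
          + (if V ≤ (n : ℕ) then 1/((V:ℝ)*(U:ℝ)) else 0)) * (lam₁ v - lamt n)^2)
      rw [hTdef]
      simp only []
      rw [hre]
      have step : ∀ n : Fin U,
          ((if (n : ℕ) = (v : ℕ) then 1/(U:ℝ) else 0)
            + (if V ≤ (n : ℕ) then 1/((V:ℝ)*(U:ℝ)) else 0)) * (lam₁ v - lamt n)^2
          = (if V ≤ (n : ℕ) then 1/((V:ℝ)*(U:ℝ)) * (lam₁ v)^2 else 0) := by
        intro n
        by_cases h1 : (n : ℕ) = (v : ℕ)
        · have hn : (n : ℕ) < V := h1 ▸ v.2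
          have hl : lamt n = lam₁ v := by
            rw [hlamt n, dif_pos hn]
            congr 1
            exact Fin.ext h1
          rw [if_pos h1, if_neg (Nat.not_le.mpr hn), hl, sub_self, if_neg (Nat.not_le.mpr hn)]
          ring
        · rw [if_neg h1, zero_add]
          by_cases h2 : V ≤ (n : ℕ)
          · have hl : lamt n = 0 := by rw [hlamt n, dif_neg (Nat.not_lt.mpr h2)]
            rw [if_pos h2, if_pos h2, hl, sub_zero]
          · rw [if_neg h2, if_neg h2, zero_mul]
      rw [Finset.sum_congr rfl fun n _ => step n, sum_ite_le, Nat.cast_sub hVU]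
      field_simp
    rw [Finset.sum_congr rfl fun v _ => hinner v, ← Finset.mul_sum]
  -- second term
  have hPmv : ∀ n : Fin U, P.mulVec lam₂ n = lam₂ (σ⁻¹ n) := by
    intro n
    rw [Matrix.mulVec, dotProduct]
    rw [Finset.sum_eq_single (σ⁻¹ n)]
    · rw [hP]; simp
    · intro u _ hu
      rw [hP, if_neg, zero_mul]
      intro hh
      exact hu (by rw [← hh]; simp)
    · intro hh; exact absurd (Finset.mem_univ _) hh
  have hSg : ∑ p : Fin V × Fin U, T p.1 p.2 * (lamt (σ p.2) - lam₂ p.2)^2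
      = (1/(U:ℝ)) * ∑ n, ((lamt - P.mulVec lam₂) n)^2 := by
    rw [Fintype.sum_prod_type, Finset.sum_comm]
    have hinner : ∀ u : Fin U, ∑ v, T v u * (lamt (σ u) - lam₂ u)^2
        = (1/(U:ℝ)) * (lamt (σ u) - lam₂ u)^2 := by
      intro u
      rw [← Finset.sum_mul, hcol u, Fintype.card_fin]
    rw [Finset.sum_congr rfl fun u _ => hinner u, ← Finset.mul_sum]
    congr 1
    have hre := Equiv.sum_comp σ (fun n : Fin U => (lamt n - lam₂ (σ⁻¹ n))^2)
    rw [show ∑ u : Fin U, (lamt (σ u) - lam₂ u)^2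
        = ∑ u : Fin U, (lamt (σ u) - lam₂ (σ⁻¹ (σ u)))^2 by
      exact Finset.sum_congr rfl fun u _ => by simp]
    rw [hre]
    exact Finset.sum_congr rfl fun n _ => by rw [Pi.sub_apply, hPmv n]
  rw [hSf, hSg]
  have hc1 : (0:ℝ) ≤ ((U:ℝ) - V) / ((V:ℝ) * U) := by
    apply div_nonneg
    · have : (V:ℝ) ≤ U := by exact_mod_cast hVU
      linarith
    · positivity
  have hc2 : (0:ℝ) ≤ (1/(U:ℝ)) := by positivity
  rw [Real.sqrt_mul hc1, Real.sqrt_mul hc2]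
  have hinv : Real.sqrt (1/(U:ℝ)) = 1 / Real.sqrt U := by
    rw [one_div, Real.sqrt_inv, one_div]
  rw [hinv]
  simp only [enorm']
  exact le_refl _
end

section
/- Let â = {t_1^u,...,t_I^u} ⊂ [0,T] and b̂ = {t_1^v,...,t_J^v} ⊂ [0,T] be two increasing sequences of event times with I ≤ J, and let N̂(t) = #{i : t_i^u ≤ t}, N(t) = #{j : t_j^v ≤ t} be their counting functions. Then (1/T)∫₀^T |N̂(t) − N(t)| dt = (1/T)[Σ_{i=1}^I |t_i^u − t_i^v| + Σ_{i=I+1}^J (T − t_i^v)]. -/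
open Finset

lemma step_mono (c : ℝ) : Monotone (fun t => if c ≤ t then (1:ℝ) else 0) := by
  intro x y hxy
  dsimp only
  split_ifs with h1 h2 <;> try norm_num
  exact absurd (h1.trans hxy) h2

lemma step_intble (c a b : ℝ) :
    IntervalIntegrable (fun t => if c ≤ t then (1:ℝ) else 0) MeasureTheory.volume a b :=
  (step_mono c).intervalIntegrable

lemma step_integral {c T : ℝ} (h0 : 0 ≤ c) (hcT : c ≤ T) :
    ∫ t in (0:ℝ)..T, (if c ≤ t then (1:ℝ) else 0) = T - c := by
  have hne : ∀ᵐ x : ℝ, x ≠ c := by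
    rw [MeasureTheory.ae_iff]
    convert Real.volume_singleton (a := c) using 2
    ext x; simp
  have h1 : (∫ t in (0:ℝ)..c, (if c ≤ t then (1:ℝ) else 0)) = ∫ t in (0:ℝ)..c, (0:ℝ) := by
    apply intervalIntegral.integral_congr_ae
    filter_upwards [hne] with x hx hmem
    rw [Set.uIoc_of_le h0] at hmem
    rw [if_neg]
    exact fun hcx => hx (le_antisymm hmem.2 hcx)
  have h2 : (∫ t in c..T, (if c ≤ t then (1:ℝ) else 0)) = ∫ t in c..T, (1:ℝ) := by
    apply intervalIntegral.integral_congr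
    intro x hx
    rw [Set.uIcc_of_le hcT] at hx
    simp only [if_pos hx.1]
  rw [← intervalIntegral.integral_add_adjacent_intervals (step_intble c 0 c) (step_intble c c T),
    h1, h2]
  simp

lemma abs_step_sub (c d t : ℝ) :
    |(if c ≤ t then (1:ℝ) else 0) - (if d ≤ t then 1 else 0)|
    = (if min c d ≤ t then (1:ℝ) else 0) - (if max c d ≤ t then 1 else 0) := by
  rcases le_total c d with h | h <;>
    simp only [min_eq_left, min_eq_right, max_eq_right, max_eq_left, h] <;>
    split_ifs <;> simp_all <;> linarith

lemma lower_char {n : ℕ} {v : Fin n → ℝ} (hv : StrictMono v) (t : ℝ) (i : Fin n) :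
    v i ≤ t ↔ (i : ℕ) < (univ.filter (fun i => v i ≤ t)).card := by
  constructor
  · intro h
    have hsub : Finset.Iic i ⊆ univ.filter (fun i => v i ≤ t) := by
      intro i' hi'
      simp only [Finset.mem_filter, Finset.mem_univ, true_and]
      exact (hv.monotone (Finset.mem_Iic.mp hi')).trans h
    have := Finset.card_le_card hsub
    rw [Fin.card_Iic] at this
    omega
  · intro h
    by_contra hc
    push_neg at hc
    have hsub : univ.filter (fun i => v i ≤ t) ⊆ Finset.Iio i := by
      intro i' hi'
      simp only [Finset.mem_filter, Finset.mem_univ, true_and] at hi'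
      exact Finset.mem_Iio.mpr (hv.lt_iff_lt.mp (lt_of_le_of_lt hi' hc))
    have := Finset.card_le_card hsub
    rw [Fin.card_Iio] at this
    omega

lemma key_ptwise {I J : ℕ} (hIJ : I ≤ J) (u : Fin I → ℝ) (s : Fin J → ℝ)
    (hu : StrictMono u) (hs : StrictMono s) (t : ℝ) :
    |((univ.filter (fun i => u i ≤ t)).card : ℝ)
      - ((univ.filter (fun j => s j ≤ t)).card : ℝ)|
    = (∑ i : Fin I, |(if u i ≤ t then (1:ℝ) else 0)
          - (if s (Fin.castLE hIJ i) ≤ t then 1 else 0)|)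
      + ∑ j : Fin J, (if (j:ℕ) < I then (0:ℝ) else if s j ≤ t then 1 else 0) := by
  classical
  set a := (univ.filter (fun i : Fin I => u i ≤ t)).card with ha_def
  set b := (univ.filter (fun i : Fin I => s (Fin.castLE hIJ i) ≤ t)).card with hb_def
  set E := (univ.filter (fun j : Fin J => s j ≤ t)).filter
    (fun j : Fin J => ¬ (j:ℕ) < I) with hE_def
  set L := (univ.filter (fun j : Fin J => s j ≤ t)).filter
    (fun j : Fin J => (j:ℕ) < I) with hL_def
  have hsv : StrictMono (fun i : Fin I => s (Fin.castLE hIJ i)) :=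
    hs.comp (Fin.strictMono_castLE hIJ)
  have hsplit : (univ.filter (fun j : Fin J => s j ≤ t)).card = L.card + E.card := by
    rw [hL_def, hE_def]
    exact (Finset.card_filter_add_card_filter_not
      (s := univ.filter (fun j : Fin J => s j ≤ t)) (fun j : Fin J => (j:ℕ) < I)).symm
  have hLb : L.card = b := by
    have himg : L = (univ.filter (fun i : Fin I => s (Fin.castLE hIJ i) ≤ t)).image
        (Fin.castLE hIJ) := by
      ext j
      simp only [hL_def, Finset.mem_filter, Finset.mem_image, Finset.mem_univ, true_and]
      constructor
      · rintro ⟨h1, h2⟩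
        refine ⟨⟨(j:ℕ), h2⟩, ?_, ?_⟩
        · have he : Fin.castLE hIJ ⟨(j:ℕ), h2⟩ = j := Fin.ext rfl
          rw [he]; exact h1
        · exact Fin.ext rfl
      · rintro ⟨i, h1, rfl⟩
        refine ⟨h1, ?_⟩
        simpa using i.isLt
    rw [himg, Finset.card_image_of_injective _ (Fin.strictMono_castLE hIJ).injective, hb_def]
  have hsum2 : (∑ j : Fin J, (if (j:ℕ) < I then (0:ℝ) else if s j ≤ t then 1 else 0))
      = (E.card : ℝ) := by
    have h0 : ∀ j : Fin J, (if (j:ℕ) < I then (0:ℝ) else if s j ≤ t then 1 else 0)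
        = if (s j ≤ t ∧ ¬ (j:ℕ) < I) then 1 else 0 := by
      intro j; split_ifs <;> tauto
    rw [Finset.sum_congr rfl (fun j _ => h0 j), Finset.sum_boole, hE_def,
      Finset.filter_filter]
  have hua : ∀ i : Fin I, u i ≤ t ↔ (i:ℕ) < a := fun i => lower_char hu t i
  have hsb : ∀ i : Fin I, s (Fin.castLE hIJ i) ≤ t ↔ (i:ℕ) < b := fun i => lower_char hsv t i
  have hsuma : (∑ i : Fin I, (if (i:ℕ) < a then (1:ℝ) else 0)) = a := by
    rw [Finset.sum_boole]
    norm_cast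
    exact congrArg Finset.card (Finset.filter_congr (fun i _ => (hua i).symm))
  have hsumb : (∑ i : Fin I, (if (i:ℕ) < b then (1:ℝ) else 0)) = b := by
    rw [Finset.sum_boole]
    norm_cast
    exact congrArg Finset.card (Finset.filter_congr (fun i _ => (hsb i).symm))
  have hsum1 : (∑ i : Fin I, |(if u i ≤ t then (1:ℝ) else 0)
      - (if s (Fin.castLE hIJ i) ≤ t then 1 else 0)|) = |(a:ℝ) - b| := by
    have hrw : ∀ i : Fin I, |(if u i ≤ t then (1:ℝ) else 0)
        - (if s (Fin.castLE hIJ i) ≤ t then 1 else 0)|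
        = |(if (i:ℕ) < a then (1:ℝ) else 0) - (if (i:ℕ) < b then 1 else 0)| := by
      intro i; rw [if_congr (hua i) rfl rfl, if_congr (hsb i) rfl rfl]
    rw [Finset.sum_congr rfl (fun i _ => hrw i)]
    rcases le_total a b with h | h
    · have h0 : ∀ i : Fin I, |(if (i:ℕ) < a then (1:ℝ) else 0) - (if (i:ℕ) < b then 1 else 0)|
          = (if (i:ℕ) < b then (1:ℝ) else 0) - (if (i:ℕ) < a then 1 else 0) := by
        intro i
        by_cases h1 : (i:ℕ) < a
        · have h2 : (i:ℕ) < b := lt_of_lt_of_le h1 h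
          simp [h1, h2]
        · by_cases h2 : (i:ℕ) < b <;> simp [h1, h2]
      rw [Finset.sum_congr rfl (fun i _ => h0 i), Finset.sum_sub_distrib, hsuma, hsumb,
        abs_of_nonpos (by simp only [sub_nonpos]; exact_mod_cast h)]
      ring
    · have h0 : ∀ i : Fin I, |(if (i:ℕ) < a then (1:ℝ) else 0) - (if (i:ℕ) < b then 1 else 0)|
          = (if (i:ℕ) < a then (1:ℝ) else 0) - (if (i:ℕ) < b then 1 else 0) := by
        intro i
        by_cases h2 : (i:ℕ) < b
        · have h1 : (i:ℕ) < a := lt_of_lt_of_le h2 h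
          simp [h1, h2]
        · by_cases h1 : (i:ℕ) < a <;> simp [h1, h2]
      rw [Finset.sum_congr rfl (fun i _ => h0 i), Finset.sum_sub_distrib, hsuma, hsumb,
        abs_of_nonneg (by simp only [sub_nonneg]; exact_mod_cast h)]
  have hEb : E.Nonempty → b = I := by
    rintro ⟨j, hj⟩
    simp only [hE_def, Finset.mem_filter, Finset.mem_univ, true_and, not_lt] at hj
    have huniv : (univ.filter (fun i : Fin I => s (Fin.castLE hIJ i) ≤ t)) = univ := by
      apply Finset.eq_univ_of_forall
      intro i
      simp only [Finset.mem_filter, Finset.mem_univ, true_and]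
      have hlt : Fin.castLE hIJ i < j := by
        rw [Fin.lt_def]; simp only [Fin.coe_castLE]; omega
      exact (hs hlt).le.trans hj.1
    rw [hb_def, huniv, Finset.card_univ, Fintype.card_fin]
  have haI : a ≤ I := le_trans (Finset.card_le_card (Finset.filter_subset _ _))
    (by rw [Finset.card_univ, Fintype.card_fin])
  rw [hsum1, hsum2, hsplit, hLb]
  rcases Finset.eq_empty_or_nonempty E with hE | hE
  · simp [hE]
  · have hb : b = I := hEb hE
    have hab : a ≤ b := hb ▸ haI
    have habR : (a:ℝ) ≤ b := by exact_mod_cast hab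
    have hcard : (0:ℝ) ≤ E.card := Nat.cast_nonneg _
    push_cast
    rw [abs_of_nonpos (by linarith), abs_of_nonpos (by linarith)]
    ring

theorem stmt_16 (T : ℝ) (hT : 0 < T) (I J : ℕ) (hIJ : I ≤ J)
    (u : Fin I → ℝ) (s : Fin J → ℝ)
    (hu : StrictMono u) (hs : StrictMono s)
    (hu' : ∀ i, u i ∈ Set.Icc 0 T) (hs' : ∀ j, s j ∈ Set.Icc 0 T) :
    (1 / T) * ∫ t in (0:ℝ)..T,
        |((Finset.univ.filter (fun i => u i ≤ t)).card : ℝ)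
          - ((Finset.univ.filter (fun j => s j ≤ t)).card : ℝ)|
      = (1 / T) * ((∑ i : Fin I, |u i - s (Fin.castLE hIJ i)|)
          + ∑ j : Fin J, if (j : ℕ) < I then 0 else T - s j) := by
  have hfi : ∀ i : Fin I, IntervalIntegrable
      (fun t => (if min (u i) (s (Fin.castLE hIJ i)) ≤ t then (1:ℝ) else 0)
        - (if max (u i) (s (Fin.castLE hIJ i)) ≤ t then 1 else 0))
      MeasureTheory.volume 0 T :=
    fun i => (step_intble _ _ _).sub (step_intble _ _ _)
  have hgj : ∀ j : Fin J, IntervalIntegrable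
      (fun t => if (j:ℕ) < I then (0:ℝ) else if s j ≤ t then 1 else 0)
      MeasureTheory.volume 0 T := by
    intro j
    by_cases hj : (j:ℕ) < I
    · simp only [hj, if_true]
      exact intervalIntegrable_const
    · simp only [hj, if_false]
      exact step_intble _ _ _
  congr 1
  rw [intervalIntegral.integral_congr (g := fun t =>
      (∑ i : Fin I, ((if min (u i) (s (Fin.castLE hIJ i)) ≤ t then (1:ℝ) else 0)
        - (if max (u i) (s (Fin.castLE hIJ i)) ≤ t then 1 else 0)))
      + ∑ j : Fin J, (if (j:ℕ) < I then (0:ℝ) else if s j ≤ t then 1 else 0))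
    (fun t _ => by
      rw [key_ptwise hIJ u s hu hs t]
      congr 1
      exact Finset.sum_congr rfl (fun i _ => abs_step_sub _ _ t))]
  have hF : IntervalIntegrable (fun t => ∑ i : Fin I,
      ((if min (u i) (s (Fin.castLE hIJ i)) ≤ t then (1:ℝ) else 0)
        - (if max (u i) (s (Fin.castLE hIJ i)) ≤ t then 1 else 0)))
      MeasureTheory.volume 0 T := by
    have h' := IntervalIntegrable.sum univ (fun i (_ : i ∈ univ) => hfi i)
    simpa only [Finset.sum_fn] using h'
  have hG : IntervalIntegrable (fun t => ∑ j : Fin J,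
      (if (j:ℕ) < I then (0:ℝ) else if s j ≤ t then 1 else 0))
      MeasureTheory.volume 0 T := by
    have h' := IntervalIntegrable.sum univ (fun j (_ : j ∈ univ) => hgj j)
    simpa only [Finset.sum_fn] using h'
  rw [intervalIntegral.integral_add hF hG,
    intervalIntegral.integral_finset_sum (fun i _ => hfi i),
    intervalIntegral.integral_finset_sum (fun j _ => hgj j)]
  congr 1
  · apply Finset.sum_congr rfl
    intro i _
    have h1 := (hu' i)
    have h2 := (hs' (Fin.castLE hIJ i))
    rw [intervalIntegral.integral_sub (step_intble _ _ _) (step_intble _ _ _),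
      step_integral (le_min h1.1 h2.1) (min_le_of_left_le h1.2),
      step_integral (le_max_of_le_left h1.1) (max_le h1.2 h2.2)]
    rw [← max_sub_min_eq_abs, max_comm, min_comm]
    ring
  · apply Finset.sum_congr rfl
    intro j _
    by_cases hj : (j:ℕ) < I
    · simp [hj]
    · simp only [hj, if_false]
      exact step_integral (hs' j).1 (hs' j).2
end
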